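/- Let X and Y be subsets of a Euclidean space. If X is (b≤)-regular along Y (meaning ⟨v, y - x⟩ ≤ o(‖y - x‖) for all x ∈ X, y ∈ Y, and unit vectors v ∈ N_X(x), as x and y tend to a common point), then X is (a)-regular along Y: for any sequence x_i ∈ X converging to a point y ∈ Y and any limiting normal vectors v_i ∈ N_X(x_i) converging to a vector v, we have v ∈ N̂_Y(y). -/

import Mathlib

open Filter Topology Metric
open scoped RealInnerProductSpace

variable {E : Type*} [NormedAddCommGroup E] [InnerProductSpace ℝ E]

/-- The Fréchet normal cone to a set `Q` at a point `x`. -/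
def frechetNormalCone (Q : Set E) (x : E) : Set E :=
  {v | ∀ ε > 0, ∃ δ > 0, ∀ y ∈ Q, ‖y - x‖ < δ → ⟪v, y - x⟫ ≤ ε * ‖y - x‖}

/-- The limiting normal cone to a set `Q` at a point `x`. -/
def limitingNormalCone (Q : Set E) (x : E) : Set E :=
  {v | ∃ xs vs : ℕ → E, (∀ n, xs n ∈ Q) ∧ (∀ n, vs n ∈ frechetNormalCone Q (xs n)) ∧
    Tendsto xs atTop (𝓝 x) ∧ Tendsto vs atTop (𝓝 v)}

lemma smul_mem_frechet {Q : Set E} {x v : E} {c : ℝ} (hc : 0 < c)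
    (hv : v ∈ frechetNormalCone Q x) : c • v ∈ frechetNormalCone Q x := by
  intro ε hε
  obtain ⟨δ, hδ, h⟩ := hv (ε / c) (div_pos hε hc)
  refine ⟨δ, hδ, fun z hz hzd => ?_⟩
  rw [real_inner_smul_left]
  calc c * ⟪v, z - x⟫ ≤ c * (ε / c * ‖z - x‖) :=
        mul_le_mul_of_nonneg_left (h z hz hzd) hc.le
    _ = ε * ‖z - x‖ := by field_simp

lemma smul_mem_limiting {Q : Set E} {x v : E} {c : ℝ} (hc : 0 < c)
    (hv : v ∈ limitingNormalCone Q x) : c • v ∈ limitingNormalCone Q x := by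
  obtain ⟨xs, vs, h1, h2, h3, h4⟩ := hv
  exact ⟨xs, fun n => c • vs n, h1, fun n => smul_mem_frechet hc (h2 n), h3, h4.const_smul c⟩

theorem bLeq_implies_aRegular (X Y : Set E)
    (hb : ∀ p : E, ∀ xs ys vs : ℕ → E,
        (∀ n, xs n ∈ X) → (∀ n, ys n ∈ Y) →
        Tendsto xs atTop (𝓝 p) → Tendsto ys atTop (𝓝 p) →
        (∀ n, vs n ∈ limitingNormalCone X (xs n)) → (∀ n, ‖vs n‖ = 1) →
        (∀ n, ys n ≠ xs n) →
        limsup (fun n => ⟪vs n, ys n - xs n⟫ / ‖ys n - xs n‖) atTop ≤ 0) :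
    ∀ y ∈ Y, ∀ xs vs : ℕ → E, ∀ v : E,
      (∀ n, xs n ∈ X) → (∀ n, vs n ∈ limitingNormalCone X (xs n)) →
      Tendsto xs atTop (𝓝 y) → Tendsto vs atTop (𝓝 v) →
      v ∈ frechetNormalCone Y y := by
  intro y hy xs vs v hXmem hvmem hxs hvs
  by_cases hv0 : v = 0
  · subst hv0
    intro ε hε
    exact ⟨1, one_pos, fun z hz _ => by
      simp only [inner_zero_left]
      positivity⟩
  by_contra hcon
  simp only [frechetNormalCone, Set.mem_setOf_eq] at hcon
  push_neg at hcon
  obtain ⟨ε, hε, hεcon⟩ := hcon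
  -- choose ys k
  have hys : ∀ k : ℕ, ∃ z ∈ Y, ‖z - y‖ < 1 / (k + 1) ∧ ε * ‖z - y‖ < ⟪v, z - y⟫ := by
    intro k
    obtain ⟨z, hz1, hz2, hz3⟩ := hεcon (1 / (k + 1)) (by positivity)
    exact ⟨z, hz1, hz2, hz3⟩
  choose ys hysY hysd hysip using hys
  have hvnorm : 0 < ‖v‖ := norm_pos_iff.mpr hv0
  have hyspos : ∀ k, 0 < ‖ys k - y‖ := by
    intro k
    rcases eq_or_ne (ys k) y with h | h
    · exfalso; have := hysip k; rw [h] at this; simp at this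
    · exact norm_sub_pos_iff.mpr h
  -- choose indices
  set c1 : ℝ := min (ε / 6) (‖v‖ / 2) with hc1
  have hc1pos : 0 < c1 := lt_min (by positivity) (by positivity)
  rw [Metric.tendsto_atTop] at hxs hvs
  obtain ⟨N2, hN2⟩ := hvs c1 hc1pos
  have hNx : ∀ k : ℕ, ∃ N : ℕ, N ≥ N2 ∧
      ‖xs N - y‖ < min (ε * ‖ys k - y‖ / (4 * ‖v‖)) (‖ys k - y‖ / 2) := by
    intro k
    have hr : 0 < min (ε * ‖ys k - y‖ / (4 * ‖v‖)) (‖ys k - y‖ / 2) := by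
      have := hyspos k
      apply lt_min <;> positivity
    obtain ⟨N1, hN1⟩ := hxs _ hr
    refine ⟨max N1 N2, le_max_right _ _, ?_⟩
    have := hN1 (max N1 N2) (le_max_left _ _)
    rwa [dist_eq_norm] at this
  choose N hNge hNlt using hNx
  set x' : ℕ → E := fun k => xs (N k) with hx'
  set v' : ℕ → E := fun k => vs (N k) with hv'
  have hvclose : ∀ k, ‖v' k - v‖ < c1 := by
    intro k
    have := hN2 (N k) (hNge k)
    rwa [dist_eq_norm] at this
  have hv'pos : ∀ k, 0 < ‖v' k‖ := by
    intro k
    have h1 := hvclose k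
    have h2 : c1 ≤ ‖v‖ / 2 := min_le_right _ _
    have h3 : ‖v‖ - ‖v' k‖ ≤ ‖v' k - v‖ := by
      have := norm_sub_norm_le (v' k) v
      linarith [abs_le.mp (abs_norm_sub_norm_le (v' k) v)]
    linarith
  have hx'close1 : ∀ k, ‖x' k - y‖ < ε * ‖ys k - y‖ / (4 * ‖v‖) :=
    fun k => lt_of_lt_of_le (hNlt k) (min_le_left _ _)
  have hx'close2 : ∀ k, ‖x' k - y‖ < ‖ys k - y‖ / 2 :=
    fun k => lt_of_lt_of_le (hNlt k) (min_le_right _ _)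
  -- difference is nonzero
  have hdpos : ∀ k, 0 < ‖ys k - x' k‖ := by
    intro k
    have h1 := hx'close2 k
    have h2 := hyspos k
    have : ‖ys k - y‖ - ‖x' k - y‖ ≤ ‖ys k - x' k‖ := by
      have := norm_sub_le_norm_sub_add_norm_sub (ys k) y (x' k)
      calc ‖ys k - y‖ - ‖x' k - y‖ ≤ ‖ys k - x' k‖ + ‖x' k - y‖ - ‖x' k - y‖ := by
            have h := norm_sub_le (ys k - x' k) (y - x' k)
            simp only [sub_sub_sub_cancel_right] at h
            have h' : ‖y - x' k‖ = ‖x' k - y‖ := norm_sub_rev _ _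
            linarith [norm_sub_le (ys k - x' k) (y - x' k)]
        _ = ‖ys k - x' k‖ := by ring
    linarith
  have hne : ∀ k, ys k ≠ x' k := by
    intro k h
    have := hdpos k
    rw [h] at this
    simp at this
  -- key estimate
  have hkey : ∀ k, (ε / 3) * ‖ys k - x' k‖ ≤ ⟪v' k, ys k - x' k⟫ := by
    intro k
    set R := ‖ys k - y‖ with hR
    set d := ys k - x' k with hd
    have hsplit : ⟪v' k, d⟫ = ⟪v, ys k - y⟫ + ⟪v, y - x' k⟫ + ⟪v' k - v, d⟫ := by
      rw [inner_sub_left]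
      have : (⟪v, ys k - y⟫ : ℝ) + ⟪v, y - x' k⟫ = ⟪v, d⟫ := by
        rw [← inner_add_right]
        congr 1
        simp [hd]
      linarith [this]
    have h1 : ε * R < ⟪v, ys k - y⟫ := hysip k
    have h2 : -(ε / 4 * R) ≤ ⟪v, y - x' k⟫ := by
      have hcs : |(⟪v, y - x' k⟫ : ℝ)| ≤ ‖v‖ * ‖y - x' k‖ := abs_real_inner_le_norm _ _
      have hrev : ‖y - x' k‖ = ‖x' k - y‖ := norm_sub_rev _ _
      have := hx'close1 k
      have hb1 : ‖v‖ * ‖x' k - y‖ ≤ ε / 4 * R := by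
        have := mul_le_mul_of_nonneg_left (le_of_lt (hx'close1 k)) hvnorm.le
        calc ‖v‖ * ‖x' k - y‖ ≤ ‖v‖ * (ε * R / (4 * ‖v‖)) := this
          _ = ε / 4 * R := by field_simp
      rw [hrev] at hcs
      linarith [abs_le.mp hcs]
    have hdle : ‖d‖ ≤ 3 / 2 * R := by
      have htr : ‖d‖ ≤ ‖ys k - y‖ + ‖y - x' k‖ := norm_sub_le_norm_sub_add_norm_sub _ _ _
      have hrev : ‖y - x' k‖ = ‖x' k - y‖ := norm_sub_rev _ _
      have := hx'close2 k
      linarith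
    have h3 : -(ε / 4 * R) ≤ ⟪v' k - v, d⟫ := by
      have hcs : |(⟪v' k - v, d⟫ : ℝ)| ≤ ‖v' k - v‖ * ‖d‖ := abs_real_inner_le_norm _ _
      have hc1le : c1 ≤ ε / 6 := min_le_left _ _
      have : ‖v' k - v‖ * ‖d‖ ≤ ε / 6 * (3 / 2 * R) := by
        apply mul_le_mul (le_trans (hvclose k).le hc1le) hdle (norm_nonneg _) (by positivity)
      have h64 : ε / 6 * (3 / 2 * R) = ε / 4 * R := by ring
      linarith [abs_le.mp hcs]
    have h4 : ε / 2 * R ≤ ⟪v' k, d⟫ := by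
      rw [hsplit]; linarith
    have h5 : ε / 3 * ‖d‖ ≤ ε / 2 * R := by
      nlinarith [hdle, hε]
    linarith
  -- normalized vectors
  set u : ℕ → E := fun k => (‖v' k‖)⁻¹ • v' k with hu
  have hunorm : ∀ k, ‖u k‖ = 1 := by
    intro k
    rw [hu]
    simp only [norm_smul, norm_inv, norm_norm]
    exact inv_mul_cancel₀ (hv'pos k).ne'
  have humem : ∀ k, u k ∈ limitingNormalCone X (x' k) :=
    fun k => smul_mem_limiting (inv_pos.mpr (hv'pos k)) (hvmem (N k))
  -- convergence
  have hystend : Tendsto ys atTop (𝓝 y) := by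
    rw [tendsto_iff_norm_sub_tendsto_zero]
    apply squeeze_zero (fun k => norm_nonneg _) (fun k => (hysd k).le)
    exact tendsto_one_div_add_atTop_nhds_zero_nat
  have hx'tend : Tendsto x' atTop (𝓝 y) := by
    rw [tendsto_iff_norm_sub_tendsto_zero]
    refine squeeze_zero (fun k => norm_nonneg _) (fun k => ?_)
      tendsto_one_div_add_atTop_nhds_zero_nat
    have h1 := hx'close2 k
    have h2 := hysd k
    have h3 := hyspos k
    linarith
  -- apply hb
  have hlimsup := hb y x' ys u (fun k => hXmem (N k)) hysY hx'tend hystend humem hunorm hne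
  -- lower bound on terms
  set c0 : ℝ := (ε / 3) / (‖v‖ + ε / 6) with hc0
  have hc0pos : 0 < c0 := by positivity
  have hterm : ∀ k, c0 ≤ ⟪u k, ys k - x' k⟫ / ‖ys k - x' k‖ := by
    intro k
    have hk := hkey k
    have hd := hdpos k
    have hv'le : ‖v' k‖ ≤ ‖v‖ + ε / 6 := by
      have h1 := hvclose k
      have h2 : c1 ≤ ε / 6 := min_le_left _ _
      have h3 : ‖v' k‖ - ‖v‖ ≤ ‖v' k - v‖ := by
        linarith [abs_le.mp (abs_norm_sub_norm_le (v' k) v)]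
      linarith
    have hip : ⟪u k, ys k - x' k⟫ = ‖v' k‖⁻¹ * ⟪v' k, ys k - x' k⟫ := by
      rw [hu]; exact real_inner_smul_left _ _ _
    rw [hip, hc0, div_le_div_iff₀ (by positivity) hd]
    have hvk := hv'pos k
    have hip0 : (0:ℝ) ≤ ⟪v' k, ys k - x' k⟫ := le_trans (by positivity) hk
    have step : ε / 3 * ‖ys k - x' k‖ * ‖v' k‖ ≤ ⟪v' k, ys k - x' k⟫ * (‖v‖ + ε / 6) :=
      le_trans (mul_le_mul_of_nonneg_right hk hvk.le)
        (mul_le_mul_of_nonneg_left hv'le hip0)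
    calc ε / 3 * ‖ys k - x' k‖
        = ‖v' k‖⁻¹ * (ε / 3 * ‖ys k - x' k‖ * ‖v' k‖) := by
          rw [inv_mul_eq_div, eq_div_iff hvk.ne']
      _ ≤ ‖v' k‖⁻¹ * (⟪v' k, ys k - x' k⟫ * (‖v‖ + ε / 6)) :=
          mul_le_mul_of_nonneg_left step (by positivity)
      _ = ‖v' k‖⁻¹ * ⟪v' k, ys k - x' k⟫ * (‖v‖ + ε / 6) := by ring
  have hbdd : IsBoundedUnder (· ≤ ·) atTop (fun k => ⟪u k, ys k - x' k⟫ / ‖ys k - x' k‖) := by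
    refine isBoundedUnder_of ⟨1, fun k => ?_⟩
    have hcs := real_inner_le_norm (u k) (ys k - x' k)
    rw [hunorm k, one_mul] at hcs
    exact div_le_one_of_le₀ hcs (norm_nonneg _)
  have : c0 ≤ limsup (fun k => ⟪u k, ys k - x' k⟫ / ‖ys k - x' k‖) atTop :=
    le_limsup_of_frequently_le (Frequently.of_forall hterm) hbdd
  linarith
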